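/- Let K ⊆ ℝ^m be a closed convex set and f : K → ℝ a continuous convex function (not necessarily nonnegative). Suppose u and u_i are measurable ℝ^m-valued functions on ℝ^n with values in K whose components lie in L^∞(μ), and u_i → u weakly* in (L^∞(μ))^m. Then for every bounded measurable set Ω ⊂ ℝ^n: liminf_{i→∞} ∫_Ω f(u_i) dμ ≥ ∫_Ω f(u) dμ, provided μ(Ω) < ∞. -/

import Mathlib

open Real MeasureTheory Filter Topology Finset ENNReal

lemma exists_affine_minorant {m : ℕ} {K : Set (Fin m → ℝ)} (hK : Convex ℝ K) (hKcl : IsClosed K)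
    {f : (Fin m → ℝ) → ℝ} (hf_conv : ConvexOn ℝ K f) (hf_cont : ContinuousOn f K)
    {y : Fin m → ℝ} (hy : y ∈ K) {ε : ℝ} (hε : 0 < ε) :
    ∃ (a : Fin m → ℝ) (b : ℝ), (∀ x ∈ K, (∑ j, a j * x j) + b ≤ f x) ∧
      f y - ε < (∑ j, a j * y j) + b := by
  classical
  set epi : Set ((Fin m → ℝ) × ℝ) := {p | p.1 ∈ K ∧ f p.1 ≤ p.2} with hepi
  have hconv : Convex ℝ epi := hf_conv.convex_epigraph
  have hcl : IsClosed epi := by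
    have h1 : IsClosed {p : (Fin m → ℝ) × ℝ | p.1 ∈ K} := hKcl.preimage continuous_fst
    have h2 : ContinuousOn (fun p : (Fin m → ℝ) × ℝ => f p.1 - p.2) {p | p.1 ∈ K} :=
      (hf_cont.comp continuous_fst.continuousOn (fun p hp => hp)).sub
        continuous_snd.continuousOn
    have he : epi = {p : (Fin m → ℝ) × ℝ | p.1 ∈ K} ∩
        (fun p : (Fin m → ℝ) × ℝ => f p.1 - p.2) ⁻¹' Set.Iic 0 := by
      ext p
      simp only [hepi, Set.mem_setOf_eq, Set.mem_inter_iff, Set.mem_preimage, Set.mem_Iic,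
        sub_nonpos]
    rw [he]
    exact h2.preimage_isClosed_of_isClosed h1 isClosed_Iic
  have hpt : ((y, f y - ε) : (Fin m → ℝ) × ℝ) ∉ epi := by
    intro h
    have := h.2
    simp only at this
    linarith
  obtain ⟨φ, c, hφpt, hφepi⟩ := geometric_hahn_banach_point_closed hconv hcl hpt
  have hdec : ∀ (x : Fin m → ℝ) (t : ℝ), φ (x, t) = φ (x, 0) + t * φ (0, 1) := by
    intro x t
    have h : ((x, t) : (Fin m → ℝ) × ℝ) = (x, 0) + t • ((0 : Fin m → ℝ), (1 : ℝ)) := by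
      ext <;> simp
    rw [h, map_add, φ.map_smul, smul_eq_mul]
  set r := φ ((0 : Fin m → ℝ), (1 : ℝ)) with hrdef
  have hr : 0 < r := by
    rcases lt_trichotomy r 0 with h | h | h
    · exfalso
      set t := max (f y) ((c - φ (y, 0)) / r) with ht
      have h1 : c < φ (y, t) := hφepi (y, t) ⟨hy, le_max_left _ _⟩
      rw [hdec] at h1
      have h2 : t * r ≤ (c - φ (y, 0)) / r * r :=
        mul_le_mul_of_nonpos_right (le_max_right _ _) (le_of_lt h)
      rw [div_mul_cancel₀ _ (ne_of_lt h)] at h2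
      linarith
    · exfalso
      have h1 : c < φ (y, f y) := hφepi (y, f y) ⟨hy, le_refl _⟩
      rw [hdec, h, mul_zero, add_zero] at h1
      rw [hdec, h, mul_zero, add_zero] at hφpt
      linarith
    · exact h
  have hsum : ∀ x : Fin m → ℝ,
      (∑ j, (-(φ ((Pi.single j 1 : Fin m → ℝ), 0)) / r) * x j) + c / r
        = (c - φ (x, 0)) / r := by
    intro x
    have hfst : x = ∑ j, x j • (Pi.single j 1 : Fin m → ℝ) := by
      ext k
      simp [Finset.sum_apply, Pi.single_apply, mul_ite, mul_one, mul_zero]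
    have h0 : ((x, (0 : ℝ)) : (Fin m → ℝ) × ℝ)
        = ∑ j, x j • (((Pi.single j 1 : Fin m → ℝ)), (0 : ℝ)) := by
      rw [Prod.ext_iff]
      constructor
      · simpa [Prod.fst_sum] using hfst
      · simp [Prod.snd_sum]
    have hx : φ (x, 0) = ∑ j, x j * φ ((Pi.single j 1 : Fin m → ℝ), 0) := by
      rw [h0, map_sum]
      simp only [ContinuousLinearMap.map_smul, smul_eq_mul]
    rw [hx]
    have hterm : ∀ j : Fin m, -(φ ((Pi.single j 1 : Fin m → ℝ), 0)) / r * x j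
        = -(x j * φ ((Pi.single j 1 : Fin m → ℝ), 0)) / r := fun j => by ring
    simp_rw [hterm]
    rw [← Finset.sum_div, ← add_div]
    congr 1
    rw [Finset.sum_neg_distrib]
    ring
  refine ⟨fun j => -(φ ((Pi.single j 1 : Fin m → ℝ), 0)) / r, c / r, ?_, ?_⟩
  · intro x hx
    rw [hsum x]
    have h1 : c < φ (x, f x) := hφepi (x, f x) ⟨hx, le_refl _⟩
    rw [hdec] at h1
    rw [div_le_iff₀ hr]
    linarith
  · rw [hsum y]
    rw [hdec] at hφpt
    rw [lt_div_iff₀ hr]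
    linarith

lemma measurable_comp_of_continuousOn {α : Type*} [MeasurableSpace α] {m : ℕ}
    {K : Set (Fin m → ℝ)} (hKm : MeasurableSet K) {f : (Fin m → ℝ) → ℝ}
    (hf : ContinuousOn f K) {w : α → Fin m → ℝ} (hw : Measurable w)
    (hrange : ∀ x, w x ∈ K) : Measurable fun x => f (w x) := by
  apply measurable_of_isOpen
  intro O hO
  obtain ⟨O', hO', hOO'⟩ := continuousOn_iff'.1 hf O hO
  have h : (fun x => f (w x)) ⁻¹' O = w ⁻¹' (O' ∩ K) := by
    ext x
    simp only [Set.mem_preimage]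
    constructor
    · intro h
      have hmem : w x ∈ f ⁻¹' O ∩ K := ⟨h, hrange x⟩
      rwa [hOO'] at hmem
    · intro h
      rw [← hOO'] at h
      exact h.1
  rw [h]
  exact hw (hO'.measurableSet.inter hKm)

lemma exists_meas_version {n m : ℕ} {μ : Measure (Fin n → ℝ)} {K : Set (Fin m → ℝ)}
    (hKm : MeasurableSet K) (hKne : K.Nonempty)
    {w : (Fin n → ℝ) → (Fin m → ℝ)} (hwK : ∀ x, w x ∈ K)
    (hw : ∀ j, MemLp (fun x => w x j) ⊤ μ) :
    ∃ w' : (Fin n → ℝ) → (Fin m → ℝ), Measurable w' ∧ w' =ᵐ[μ] w ∧ ∀ x, w' x ∈ K := by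
  classical
  obtain ⟨y₀, hy₀⟩ := hKne
  have haem : ∀ j, AEMeasurable (fun x => w x j) μ := fun j =>
    ((hw j).aestronglyMeasurable).aemeasurable
  set g : (Fin n → ℝ) → (Fin m → ℝ) := fun x j => (haem j).mk _ x with hg
  have hgmeas : Measurable g := measurable_pi_lambda _ fun j => (haem j).measurable_mk
  have hgae : g =ᵐ[μ] w := by
    have h : ∀ᵐ x ∂μ, ∀ j, g x j = w x j := (ae_all_iff).2 fun j => ((haem j).ae_eq_mk).symm
    filter_upwards [h] with x hx
    exact funext hx
  refine ⟨fun x => if g x ∈ K then g x else y₀, ?_, ?_, ?_⟩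
  · exact Measurable.ite (hgmeas hKm) hgmeas measurable_const
  · filter_upwards [hgae] with x hx
    rw [hx]
    simp [hwK x]
  · intro x
    by_cases h : g x ∈ K <;> simp [h, hy₀]

lemma ae_abs_le_of_memℒp_top {α : Type*} [MeasurableSpace α] {μ : Measure α} {g : α → ℝ}
    (hg : MemLp g ⊤ μ) :
    ∃ C : ℝ, 0 ≤ C ∧ ∀ᵐ x ∂μ, |g x| ≤ C := by
  refine ⟨(eLpNormEssSup g μ).toReal, ENNReal.toReal_nonneg, ?_⟩
  have hlt : eLpNormEssSup g μ < ⊤ := by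
    have h2 := hg.2
    rwa [eLpNorm_exponent_top] at h2
  filter_upwards [ae_le_eLpNormEssSup (f := g) (μ := μ)] with x hx
  have h := ENNReal.toReal_mono hlt.ne hx
  simpa [Real.norm_eq_abs] using h

lemma exists_pairing_clm {α : Type*} [MeasurableSpace α] {μ : Measure α} {g : α → ℝ}
    (hg : MemLp g ⊤ μ) :
    ∃ T : Lp ℝ 1 μ →L[ℝ] ℝ, ∀ w : Lp ℝ 1 μ, T w = ∫ x, g x * w x ∂μ := by
  obtain ⟨C, hC0, hC⟩ : ∃ C : ℝ, 0 ≤ C ∧ ∀ᵐ x ∂μ, |g x| ≤ C := by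
    refine ⟨(eLpNormEssSup g μ).toReal, ENNReal.toReal_nonneg, ?_⟩
    have hlt : eLpNormEssSup g μ < ⊤ := by
      have h2 := hg.2; rwa [eLpNorm_exponent_top] at h2
    filter_upwards [ae_le_eLpNormEssSup (f := g) (μ := μ)] with x hx
    have h := ENNReal.toReal_mono hlt.ne hx
    simpa [Real.norm_eq_abs] using h
  have hCn : ∀ᵐ x ∂μ, ‖g x‖ ≤ C := by
    filter_upwards [hC] with x hx; simpa [Real.norm_eq_abs] using hx
  have hint : ∀ w : Lp ℝ 1 μ, Integrable (fun x => g x * w x) μ := fun w =>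
    (L1.integrable_coeFn w).bdd_mul hg.aestronglyMeasurable hCn
  refine ⟨LinearMap.mkContinuous
    { toFun := fun w => ∫ x, g x * w x ∂μ
      map_add' := ?_
      map_smul' := ?_ } C ?_, fun w => rfl⟩
  · intro w₁ w₂
    have h1 : (fun x => g x * ((w₁ + w₂ : Lp ℝ 1 μ) : α → ℝ) x)
        =ᵐ[μ] fun x => g x * w₁ x + g x * w₂ x := by
      filter_upwards [Lp.coeFn_add w₁ w₂] with x hx
      rw [hx]; simp [mul_add]
    show ∫ x, g x * ((w₁ + w₂ : Lp ℝ 1 μ) : α → ℝ) x ∂μ = _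
    rw [integral_congr_ae h1, integral_add (hint w₁) (hint w₂)]
  · intro c w
    have h1 : (fun x => g x * ((c • w : Lp ℝ 1 μ) : α → ℝ) x)
        =ᵐ[μ] fun x => c * (g x * w x) := by
      filter_upwards [Lp.coeFn_smul c w] with x hx
      rw [hx]; simp [smul_eq_mul]; ring
    show ∫ x, g x * ((c • w : Lp ℝ 1 μ) : α → ℝ) x ∂μ = _
    simp only [RingHom.id_apply, smul_eq_mul]
    rw [integral_congr_ae h1, integral_const_mul]
  · intro w
    calc ‖∫ x, g x * w x ∂μ‖ ≤ ∫ x, ‖g x * w x‖ ∂μ := norm_integral_le_integral_norm _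
      _ ≤ ∫ x, C * ‖(w : α → ℝ) x‖ ∂μ := by
          refine integral_mono_ae (hint w).norm ((L1.integrable_coeFn w).norm.const_mul C) ?_
          filter_upwards [hCn] with x hx
          rw [norm_mul]
          exact mul_le_mul_of_nonneg_right hx (norm_nonneg _)
      _ = C * ∫ x, ‖(w : α → ℝ) x‖ ∂μ := integral_const_mul _ _
      _ = C * ‖w‖ := by rw [L1.norm_eq_integral_norm]

lemma pairing_indicator_bound {α : Type*} [MeasurableSpace α] {μ : Measure α} {g : α → ℝ}
    {T : Lp ℝ 1 μ →L[ℝ] ℝ} (hT : ∀ w : Lp ℝ 1 μ, T w = ∫ x, g x * w x ∂μ)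
    {B : Set α} (hB : MeasurableSet B) (hBfin : μ B < ⊤) :
    |∫ x in B, g x ∂μ| ≤ ‖T‖ * (μ B).toReal := by
  classical
  set W := (memLp_indicator_const 1 hB (1 : ℝ) (Or.inr hBfin.ne)).toLp _ with hW
  have hWcoe : (W : α → ℝ) =ᵐ[μ] B.indicator (fun _ => (1 : ℝ)) := MemLp.coeFn_toLp _
  have h1 : T W = ∫ x in B, g x ∂μ := by
    rw [hT W, ← integral_indicator hB]
    apply integral_congr_ae
    filter_upwards [hWcoe] with x hx
    rw [hx]
    by_cases h : x ∈ B <;> simp [h]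
  have h2 : ‖W‖ = (μ B).toReal := by
    rw [L1.norm_eq_integral_norm]
    have : (fun x => ‖(W : α → ℝ) x‖) =ᵐ[μ] B.indicator (fun _ => (1 : ℝ)) := by
      filter_upwards [hWcoe] with x hx
      rw [hx]
      by_cases h : x ∈ B <;> simp [h]
    rw [integral_congr_ae this, integral_indicator_const _ hB, smul_eq_mul, mul_one, measureReal_def]
  calc |∫ x in B, g x ∂μ| = ‖T W‖ := by rw [h1, Real.norm_eq_abs]
    _ ≤ ‖T‖ * ‖W‖ := T.le_opNorm W
    _ = ‖T‖ * (μ B).toReal := by rw [h2]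

lemma ae_abs_le_of_setIntegral_bound {α : Type*} [MeasurableSpace α] {μ : Measure α} {g : α → ℝ}
    (hg : MemLp g ⊤ μ) {Ω : Set α} (hΩ : MeasurableSet Ω) (hΩfin : μ Ω < ⊤)
    {C : ℝ} (hC0 : 0 ≤ C)
    (hT : ∀ B : Set α, B ⊆ Ω → MeasurableSet B → |∫ x in B, g x ∂μ| ≤ C * (μ B).toReal) :
    ∀ᵐ x ∂μ.restrict Ω, |g x| ≤ C := by
  classical
  have haem : AEMeasurable g μ := hg.aestronglyMeasurable.aemeasurable
  set g' : α → ℝ := haem.mk g with hg'def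
  have hg'meas : Measurable g' := haem.measurable_mk
  have hg'ae : g =ᵐ[μ] g' := haem.ae_eq_mk
  have hgint : ∀ B : Set α, B ⊆ Ω → MeasurableSet B → IntegrableOn g B μ := by
    intro B hBΩ hB
    haveI : IsFiniteMeasure (μ.restrict B) := ⟨by
      rw [Measure.restrict_apply_univ]
      exact lt_of_le_of_lt (measure_mono hBΩ) hΩfin⟩
    exact (hg.restrict B).integrable le_top
  have key1 : ∀ c : ℝ, C < c → μ (Ω ∩ {x | c < g' x}) = 0 := by
    intro c hc
    set B := Ω ∩ {x | c < g' x} with hBdef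
    have hBm : MeasurableSet B := hΩ.inter (measurableSet_lt measurable_const hg'meas)
    have hBfin : μ B < ⊤ := lt_of_le_of_lt (measure_mono Set.inter_subset_left) hΩfin
    have h1 : c * (μ B).toReal ≤ ∫ x in B, g x ∂μ := by
      have hmono := setIntegral_mono_on_ae (f := fun _ => c) (g := g)
        (integrableOn_const hBfin.ne) (hgint B Set.inter_subset_left hBm) hBm ?_
      · calc c * (μ B).toReal = (μ B).toReal • c := by rw [smul_eq_mul, mul_comm]
          _ = ∫ _ in B, c ∂μ := (setIntegral_const c).symm
          _ ≤ ∫ x in B, g x ∂μ := hmono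
      · filter_upwards [hg'ae] with x hx hxB
        rw [hx]
        exact le_of_lt hxB.2
    have h2 : ∫ x in B, g x ∂μ ≤ C * (μ B).toReal :=
      le_trans (le_abs_self _) (hT B Set.inter_subset_left hBm)
    have h3 : (μ B).toReal = 0 := by nlinarith [ENNReal.toReal_nonneg (a := μ B)]
    exact ((ENNReal.toReal_eq_zero_iff _).mp h3).resolve_right hBfin.ne
  have key2 : ∀ c : ℝ, C < c → μ (Ω ∩ {x | g' x < -c}) = 0 := by
    intro c hc
    set B := Ω ∩ {x | g' x < -c} with hBdef
    have hBm : MeasurableSet B := hΩ.inter (measurableSet_lt hg'meas measurable_const)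
    have hBfin : μ B < ⊤ := lt_of_le_of_lt (measure_mono Set.inter_subset_left) hΩfin
    have h1 : ∫ x in B, g x ∂μ ≤ (-c) * (μ B).toReal := by
      have hmono := setIntegral_mono_on_ae (f := g) (g := fun _ => -c)
        (hgint B Set.inter_subset_left hBm) (integrableOn_const hBfin.ne) hBm ?_
      · calc ∫ x in B, g x ∂μ ≤ ∫ _ in B, (-c) ∂μ := hmono
          _ = (μ B).toReal • (-c) := setIntegral_const _
          _ = (-c) * (μ B).toReal := by rw [smul_eq_mul, mul_comm]
      · filter_upwards [hg'ae] with x hx hxB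
        rw [hx]
        exact le_of_lt hxB.2
    have h2 : -(C * (μ B).toReal) ≤ ∫ x in B, g x ∂μ :=
      neg_le_of_abs_le (hT B Set.inter_subset_left hBm)
    have h3 : (μ B).toReal = 0 := by nlinarith [ENNReal.toReal_nonneg (a := μ B)]
    exact ((ENNReal.toReal_eq_zero_iff _).mp h3).resolve_right hBfin.ne
  have key : μ (Ω ∩ {x | C < |g' x|}) = 0 := by
    have hsub : Ω ∩ {x | C < |g' x|} ⊆
        ⋃ k : ℕ, ((Ω ∩ {x | C + 1 / (k + 1) < g' x}) ∪
          (Ω ∩ {x | g' x < -(C + 1 / (k + 1))})) := by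
      rintro x ⟨hx1, hx2⟩
      have hx2' : C < |g' x| := hx2
      obtain ⟨k, hk⟩ := exists_nat_one_div_lt (sub_pos.mpr hx2')
      refine Set.mem_iUnion.2 ⟨k, ?_⟩
      rcases lt_abs.mp (show C + 1 / (k + 1 : ℝ) < |g' x| by linarith) with h | h
      · exact Or.inl ⟨hx1, h⟩
      · exact Or.inr ⟨hx1, show g' x < -(C + 1 / (k + 1 : ℝ)) by linarith⟩
    refine measure_mono_null hsub (measure_iUnion_null fun k => measure_union_null ?_ ?_)
    · exact key1 _ (lt_add_of_pos_right _ (by positivity))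
    · exact key2 _ (lt_add_of_pos_right _ (by positivity))
  rw [ae_restrict_iff' hΩ]
  have hae' : ∀ᵐ x ∂μ, x ∈ Ω → |g' x| ≤ C := by
    rw [ae_iff]
    apply measure_mono_null _ key
    intro x hx
    simp only [Set.mem_setOf_eq, not_forall, not_le] at hx
    exact ⟨hx.1, hx.2⟩
  filter_upwards [hae', hg'ae] with x h1 h2 hxΩ
  rw [h2]
  exact h1 hxΩ

/-- Theorem 5 of the paper: for a (not necessarily nonnegative) continuous convex function
`f` on a closed convex set `K ⊆ ℝ^m`, weak* convergence `u_i → u` in `(L^∞(μ))^m` gives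
`liminf ∫_Ω f(u_i) dμ ≥ ∫_Ω f(u) dμ` for every bounded measurable `Ω` of finite measure. -/
theorem stmt_13 (n m : ℕ) (μ : Measure (Fin n → ℝ))
    (K : Set (Fin m → ℝ)) (hK : Convex ℝ K) (hKcl : IsClosed K)
    (f : (Fin m → ℝ) → ℝ)
    (hf_conv : ConvexOn ℝ K f) (hf_cont : ContinuousOn f K)
    (u : ℕ → (Fin n → ℝ) → (Fin m → ℝ)) (v : (Fin n → ℝ) → (Fin m → ℝ))
    (huK : ∀ i x, u i x ∈ K) (hvK : ∀ x, v x ∈ K)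
    (hu : ∀ i j, MemLp (fun x => u i x j) ⊤ μ)
    (hv : ∀ j, MemLp (fun x => v x j) ⊤ μ)
    (hweak : ∀ j, ∀ w : (Fin n → ℝ) → ℝ, Integrable w μ →
      Tendsto (fun i => ∫ x, u i x j * w x ∂μ) atTop (𝓝 (∫ x, v x j * w x ∂μ)))
    (Ω : Set (Fin n → ℝ)) (hΩ : MeasurableSet Ω)
    (hΩbd : Bornology.IsBounded Ω) (hΩfin : μ Ω < ⊤) :
    ∫ x in Ω, f (v x) ∂μ ≤
      Filter.liminf (fun i => ∫ x in Ω, f (u i x) ∂μ) atTop := by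
  classical
  haveI hfinΩ : IsFiniteMeasure (μ.restrict Ω) := ⟨by rwa [Measure.restrict_apply_univ]⟩
  have hKm : MeasurableSet K := hKcl.measurableSet
  have hKne : K.Nonempty := ⟨v (fun _ => 0), hvK _⟩
  -- dispose of the trivial case
  rcases eq_or_ne (μ.restrict Ω) 0 with h0 | h0
  · have hz : ∀ g : (Fin n → ℝ) → ℝ, ∫ x in Ω, g x ∂μ = 0 := fun g => by
      rw [show μ.restrict Ω = 0 from h0, integral_zero_measure]
    simp only [hz]
    rw [liminf_const]
  haveI : NeBot (ae (μ.restrict Ω)) := ae_neBot.2 h0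
  -- Step A : uniform essential bounds on Ω
  have hcomp_bound : ∀ j : Fin m, ∃ Cj : ℝ, 0 ≤ Cj ∧
      ∀ i, ∀ᵐ x ∂μ.restrict Ω, |u i x j| ≤ Cj := by
    intro j
    choose T hT using fun i => exists_pairing_clm (hu i j)
    have hptwise : ∀ w : Lp ℝ 1 μ, ∃ C, ∀ i, ‖T i w‖ ≤ C := by
      intro w
      have hconv := hweak j w (L1.integrable_coeFn w)
      have heq : (fun i => ‖T i w‖) = fun i => ‖∫ x, u i x j * w x ∂μ‖ := by
        funext i; rw [hT i w]
      have htend : Tendsto (fun i => ‖T i w‖) atTop (𝓝 ‖∫ x, v x j * w x ∂μ‖) := by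
        rw [heq]; exact hconv.norm
      obtain ⟨C, hC⟩ := htend.bddAbove_range
      exact ⟨C, fun i => hC (Set.mem_range_self i)⟩
    obtain ⟨C', hC'⟩ := banach_steinhaus hptwise
    refine ⟨max C' 0, le_max_right _ _, fun i => ?_⟩
    apply ae_abs_le_of_setIntegral_bound (hu i j) hΩ hΩfin (le_max_right _ _)
    intro B hBΩ hB
    calc |∫ x in B, u i x j ∂μ| ≤ ‖T i‖ * (μ B).toReal :=
          pairing_indicator_bound (hT i) hB (lt_of_le_of_lt (measure_mono hBΩ) hΩfin)
      _ ≤ max C' 0 * (μ B).toReal :=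
          mul_le_mul_of_nonneg_right ((hC' i).trans (le_max_left _ _)) ENNReal.toReal_nonneg
  choose Cu hCu0 hCu using hcomp_bound
  have hvcomp : ∀ j : Fin m, ∃ Cj : ℝ, 0 ≤ Cj ∧ ∀ᵐ x ∂μ, |v x j| ≤ Cj := fun j =>
    ae_abs_le_of_memℒp_top (hv j)
  choose Cv hCv0 hCv using hvcomp
  set R : ℝ := (∑ j, Cu j) + (∑ j, Cv j) with hRdef
  have hR0 : 0 ≤ R := by
    apply add_nonneg <;> exact Finset.sum_nonneg fun j _ => by first | exact hCu0 j | exact hCv0 j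
  have hCuR : ∀ j, Cu j ≤ R := fun j => by
    have h1 : Cu j ≤ ∑ j, Cu j := Finset.single_le_sum (fun j _ => hCu0 j) (Finset.mem_univ j)
    have h2 : 0 ≤ ∑ j, Cv j := Finset.sum_nonneg fun j _ => hCv0 j
    linarith
  have hCvR : ∀ j, Cv j ≤ R := fun j => by
    have h1 : Cv j ≤ ∑ j, Cv j := Finset.single_le_sum (fun j _ => hCv0 j) (Finset.mem_univ j)
    have h2 : 0 ≤ ∑ j, Cu j := Finset.sum_nonneg fun j _ => hCu0 j
    linarith
  have hubd : ∀ i, ∀ᵐ x ∂μ.restrict Ω, ‖u i x‖ ≤ R := by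
    intro i
    have h : ∀ᵐ x ∂μ.restrict Ω, ∀ j, |u i x j| ≤ Cu j := ae_all_iff.2 fun j => hCu j i
    filter_upwards [h] with x hx
    rw [pi_norm_le_iff_of_nonneg hR0]
    intro j
    exact le_trans (by simpa [Real.norm_eq_abs] using hx j) (hCuR j)
  have hvbd : ∀ᵐ x ∂μ, ‖v x‖ ≤ R := by
    have h : ∀ᵐ x ∂μ, ∀ j, |v x j| ≤ Cv j := ae_all_iff.2 fun j => hCv j
    filter_upwards [h] with x hx
    rw [pi_norm_le_iff_of_nonneg hR0]
    intro j
    exact le_trans (by simpa [Real.norm_eq_abs] using hx j) (hCvR j)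
  -- the compact set where everything lives
  set C : Set (Fin m → ℝ) := K ∩ Metric.closedBall 0 R with hCdef
  have hCK : C ⊆ K := Set.inter_subset_left
  have hCcomp : IsCompact C := (isCompact_closedBall (0 : Fin m → ℝ) R).inter_left hKcl
  obtain ⟨M, hM⟩ := hCcomp.exists_bound_of_continuousOn (hf_cont.mono hCK)
  -- a point of C
  have hvbdΩ : ∀ᵐ x ∂μ.restrict Ω, ‖v x‖ ≤ R := ae_restrict_of_ae hvbd
  obtain ⟨x₀, hx₀⟩ := hvbdΩ.exists
  set y₀ : Fin m → ℝ := v x₀ with hy₀def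
  have hy₀C : y₀ ∈ C := ⟨hvK x₀, mem_closedBall_zero_iff.2 hx₀⟩
  -- measurable version of v with values in C
  obtain ⟨v₀, hv₀meas, hv₀ae, hv₀K⟩ := exists_meas_version hKm hKne hvK hv
  set v' : (Fin n → ℝ) → (Fin m → ℝ) := fun x => if v₀ x ∈ C then v₀ x else y₀ with hv'def
  have hv'meas : Measurable v' := Measurable.ite
    (hv₀meas (hKm.inter measurableSet_closedBall)) hv₀meas measurable_const
  have hv'C : ∀ x, v' x ∈ C := by
    intro x
    by_cases h : v₀ x ∈ C <;> simp [hv'def, h, hy₀C]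
  have hv'ae : v' =ᵐ[μ] v := by
    filter_upwards [hv₀ae, hvbd] with x h1 h2
    have : v₀ x ∈ C := by
      rw [h1]
      exact ⟨hvK x, mem_closedBall_zero_iff.2 h2⟩
    simp only [hv'def, if_pos this]
    exact h1
  -- integrability of compositions
  have hfint : ∀ (w : (Fin n → ℝ) → (Fin m → ℝ)), (∀ x, w x ∈ K) →
      (∀ j, MemLp (fun x => w x j) ⊤ μ) → (∀ᵐ x ∂μ.restrict Ω, ‖w x‖ ≤ R) →
      IntegrableOn (fun x => f (w x)) Ω μ := by
    intro w hwK hwlp hwbd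
    obtain ⟨w₀, hw₀meas, hw₀ae, hw₀K⟩ := exists_meas_version hKm hKne hwK hwlp
    have hmeas : Measurable fun x => f (w₀ x) :=
      measurable_comp_of_continuousOn hKm hf_cont hw₀meas hw₀K
    have hsm : AEStronglyMeasurable (fun x => f (w x)) (μ.restrict Ω) := by
      refine (hmeas.aestronglyMeasurable).congr ?_
      exact ae_restrict_of_ae (hw₀ae.mono fun x hx => congrArg f hx)
    refine Integrable.mono' (integrable_const M) hsm ?_
    filter_upwards [hwbd] with x hx
    exact hM _ ⟨hwK x, mem_closedBall_zero_iff.2 hx⟩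
  have hintu : ∀ i, IntegrableOn (fun x => f (u i x)) Ω μ := fun i =>
    hfint (u i) (huK i) (hu i) (hubd i)
  have hintv : IntegrableOn (fun x => f (v x)) Ω μ :=
    hfint v hvK hv (ae_restrict_of_ae hvbd)
  -- an upper bound for the approximating integrals
  have hupper : ∀ i, ∫ x in Ω, f (u i x) ∂μ ≤ (μ Ω).toReal * M := by
    intro i
    calc ∫ x in Ω, f (u i x) ∂μ ≤ ∫ _ in Ω, M ∂μ := by
          refine integral_mono_ae (hintu i) (integrable_const M) ?_
          filter_upwards [hubd i] with x hx
          have h := hM _ (⟨huK i x, mem_closedBall_zero_iff.2 hx⟩ : u i x ∈ C)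
          rw [Real.norm_eq_abs] at h
          exact le_trans (le_abs_self _) h
      _ = (μ Ω).toReal * M := by rw [setIntegral_const, smul_eq_mul, measureReal_def]
  -- main ε-argument
  have main : ∀ ε : ℝ, 0 < ε → ∫ x in Ω, f (v x) ∂μ ≤
      Filter.liminf (fun i => ∫ x in Ω, f (u i x) ∂μ) atTop + ε * (μ Ω).toReal := by
    intro ε hε
    -- affine minorants
    have haff : ∀ y : Fin m → ℝ, ∃ (a : Fin m → ℝ) (b : ℝ), y ∈ C →
        ((∀ x ∈ K, (∑ j, a j * x j) + b ≤ f x) ∧ f y - ε < (∑ j, a j * y j) + b) := by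
      intro y
      by_cases hy : y ∈ C
      · obtain ⟨a, b, h1, h2⟩ := exists_affine_minorant hK hKcl hf_conv hf_cont (hCK hy) hε
        exact ⟨a, b, fun _ => ⟨h1, h2⟩⟩
      · exact ⟨0, 0, fun h => absurd h hy⟩
    choose A B hAB using haff
    -- relatively open neighbourhoods
    have hopen : ∀ y : Fin m → ℝ, ∃ O : Set (Fin m → ℝ), y ∈ C →
        (IsOpen O ∧ y ∈ O ∧ ∀ z ∈ O ∩ K, f z - ε < (∑ j, A y j * z j) + B y) := by
      intro y
      by_cases hy : y ∈ C
      · have hg : ContinuousOn (fun z => f z - ((∑ j, A y j * z j) + B y)) K := by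
          apply hf_cont.sub
          exact Continuous.continuousOn
            ((continuous_finset_sum _ fun j _ => continuous_const.mul (continuous_apply j)).add
              continuous_const)
        obtain ⟨O, hOopen, hOeq⟩ := continuousOn_iff'.1 hg (Set.Iio ε) isOpen_Iio
        refine ⟨O, fun _ => ⟨hOopen, ?_, ?_⟩⟩
        · have hy2 : y ∈ (fun z => f z - ((∑ j, A y j * z j) + B y)) ⁻¹' (Set.Iio ε) ∩ K := by
            refine ⟨?_, hCK hy⟩
            simp only [Set.mem_preimage, Set.mem_Iio]
            linarith [(hAB y hy).2]
          rw [hOeq] at hy2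
          exact hy2.1
        · intro z hz
          rw [← hOeq] at hz
          have := hz.1
          simp only [Set.mem_preimage, Set.mem_Iio] at this
          linarith
      · exact ⟨∅, fun h => absurd h hy⟩
    choose O hO using hopen
    -- finite subcover
    have hcover : C ⊆ ⋃ y ∈ C, O y := fun y hy => Set.mem_biUnion hy (hO y hy).2.1
    obtain ⟨t, htC, htfin, htcover⟩ :=
      hCcomp.elim_finite_subcover_image (fun y hy => (hO y hy).1) hcover
    set l := htfin.toFinset.toList with hldef
    set N := l.length with hNdef
    have hlmem : ∀ y, y ∈ l ↔ y ∈ t := by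
      intro y
      rw [hldef, Finset.mem_toList, Set.Finite.mem_toFinset]
    set Y : ℕ → (Fin m → ℝ) := fun k => if hk : k < N then l.get ⟨k, hk⟩ else y₀ with hYdef
    have hYC : ∀ k, k < N → Y k ∈ C := by
      intro k hk
      rw [hYdef]
      simp only [dif_pos hk]
      exact htC ((hlmem _).1 (List.get_mem l ⟨k, hk⟩))
    set e : ℕ → Set (Fin m → ℝ) := fun k => if hk : k < N then O (Y k) else ∅ with hedef
    have hemeas : ∀ k, MeasurableSet (e k) := by
      intro k
      rw [hedef]
      by_cases hk : k < N
      · simp only [dif_pos hk]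
        exact ((hO _ (hYC k hk)).1).measurableSet
      · simp only [dif_neg hk]
        exact MeasurableSet.empty
    set D : ℕ → Set (Fin m → ℝ) := disjointed e with hDdef
    have hDmeas : ∀ k, MeasurableSet (D k) := MeasurableSet.disjointed hemeas
    set S : ℕ → Set (Fin n → ℝ) := fun k => Ω ∩ v' ⁻¹' (D k) with hSdef
    have hSmeas : ∀ k, MeasurableSet (S k) := fun k => hΩ.inter (hv'meas (hDmeas k))
    have hSsub : ∀ k, S k ⊆ Ω := fun k => Set.inter_subset_left
    have hSdisj : ∀ a b : ℕ, a ≠ b → Disjoint (S a) (S b) := by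
      intro a b hab
      refine Set.disjoint_left.2 fun x hxa hxb => ?_
      exact Set.disjoint_left.1 (disjoint_disjointed e hab) hxa.2 hxb.2
    have hCsub : ∀ z, z ∈ C → z ∈ ⋃ k, D k := by
      intro z hz
      rw [hDdef, iUnion_disjointed]
      obtain ⟨y, hyt, hzy⟩ := Set.mem_iUnion₂.1 (htcover hz)
      obtain ⟨kf, hkeq⟩ := List.mem_iff_get.1 ((hlmem y).2 hyt)
      refine Set.mem_iUnion.2 ⟨kf.1, ?_⟩
      rw [hedef]
      simp only [dif_pos (show (kf : ℕ) < N from kf.isLt)]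
      have hYk : Y kf.1 = y := by
        rw [hYdef]
        simp only [dif_pos (show (kf : ℕ) < N from kf.isLt)]
        rw [← hkeq]
      rw [hYk]
      exact hzy
    have hSun : (⋃ k ∈ Finset.range N, S k) = Ω := by
      apply Set.Subset.antisymm
      · exact Set.iUnion₂_subset fun k _ => hSsub k
      · intro x hx
        obtain ⟨k, hk⟩ := Set.mem_iUnion.1 (hCsub (v' x) (hv'C x))
        have hkN : k < N := by
          by_contra h
          have hsub : D k ⊆ e k := disjointed_subset e k
          rw [hedef] at hsub
          simp only [dif_neg h] at hsub
          exact hsub hk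
        exact Set.mem_biUnion (Finset.mem_range.2 hkN) ⟨hx, hk⟩
    -- integrability of affine compositions
    have hlint : ∀ (w : (Fin n → ℝ) → (Fin m → ℝ)), (∀ j, MemLp (fun x => w x j) ⊤ μ) →
        ∀ (y : Fin m → ℝ) (T : Set (Fin n → ℝ)), T ⊆ Ω → MeasurableSet T →
        IntegrableOn (fun x => (∑ j, A y j * w x j) + B y) T μ := by
      intro w hwlp y T hTΩ hTm
      haveI : IsFiniteMeasure (μ.restrict T) := ⟨by
        rw [Measure.restrict_apply_univ]
        exact lt_of_le_of_lt (measure_mono hTΩ) hΩfin⟩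
      apply Integrable.add ?_ (integrable_const _)
      apply integrable_finset_sum
      intro j _
      exact (((hwlp j).restrict T).integrable le_top).const_mul _
    -- expansion of the affine integrals
    have hexp : ∀ (w : (Fin n → ℝ) → (Fin m → ℝ)), (∀ j, MemLp (fun x => w x j) ⊤ μ) →
        ∀ (y : Fin m → ℝ) (T : Set (Fin n → ℝ)), T ⊆ Ω → MeasurableSet T →
        ∫ x in T, ((∑ j, A y j * w x j) + B y) ∂μ
          = (∑ j, A y j * ∫ x in T, w x j ∂μ) + B y * (μ T).toReal := by
      intro w hwlp y T hTΩ hTm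
      haveI : IsFiniteMeasure (μ.restrict T) := ⟨by
        rw [Measure.restrict_apply_univ]
        exact lt_of_le_of_lt (measure_mono hTΩ) hΩfin⟩
      rw [integral_add (integrable_finset_sum _ fun j _ =>
        (((hwlp j).restrict T).integrable le_top).const_mul _) (integrable_const _)]
      congr 1
      · rw [integral_finset_sum _ fun j _ =>
          (((hwlp j).restrict T).integrable le_top).const_mul _]
        exact Finset.sum_congr rfl fun j _ => integral_const_mul _ _
      · rw [setIntegral_const, smul_eq_mul, mul_comm, measureReal_def]
    -- convergence of the affine integrals
    have hconv : ∀ (y : Fin m → ℝ) (T : Set (Fin n → ℝ)), T ⊆ Ω → MeasurableSet T →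
        Tendsto (fun i => ∫ x in T, ((∑ j, A y j * u i x j) + B y) ∂μ) atTop
          (𝓝 (∫ x in T, ((∑ j, A y j * v x j) + B y) ∂μ)) := by
      intro y T hTΩ hTm
      have hTfin : μ T < ⊤ := lt_of_le_of_lt (measure_mono hTΩ) hΩfin
      have hcomp : ∀ j, Tendsto (fun i => ∫ x in T, u i x j ∂μ) atTop
          (𝓝 (∫ x in T, v x j ∂μ)) := by
        intro j
        have hwint : Integrable (T.indicator (fun _ => (1 : ℝ))) μ := by
          rw [integrable_indicator_iff hTm]
          exact integrableOn_const hTfin.ne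
        have h := hweak j _ hwint
        have heq : ∀ (g : (Fin n → ℝ) → ℝ),
            (fun x => g x * T.indicator (fun _ => (1 : ℝ)) x) = T.indicator g := by
          intro g
          funext x
          by_cases hx : x ∈ T <;> simp [hx]
        have key : ∀ g : (Fin n → ℝ) → ℝ,
            ∫ x, g x * T.indicator (fun _ => (1 : ℝ)) x ∂μ = ∫ x in T, g x ∂μ := by
          intro g
          rw [heq g, integral_indicator hTm]
        have h2 : (fun i => ∫ x, u i x j * T.indicator (fun _ => (1 : ℝ)) x ∂μ)
            = fun i => ∫ x in T, u i x j ∂μ := funext fun i => key _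
        rw [h2, key] at h
        exact h
      have hre : (fun i => ∫ x in T, ((∑ j, A y j * u i x j) + B y) ∂μ)
          = fun i => (∑ j, A y j * ∫ x in T, u i x j ∂μ) + B y * (μ T).toReal := by
        funext i
        exact hexp (u i) (hu i) y T hTΩ hTm
      rw [hre, hexp v hv y T hTΩ hTm]
      exact Tendsto.add (tendsto_finset_sum _ fun j _ => (hcomp j).const_mul _)
        tendsto_const_nhds
    -- the three main quantities
    set G : ℕ → ℝ := fun i => ∫ x in Ω, f (u i x) ∂μ with hGdef
    set L : ℕ → ℝ := fun i =>
      ∑ k ∈ Finset.range N, ∫ x in S k, ((∑ j, A (Y k) j * u i x j) + B (Y k)) ∂μ with hLdef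
    set Linf : ℝ :=
      ∑ k ∈ Finset.range N, ∫ x in S k, ((∑ j, A (Y k) j * v x j) + B (Y k)) ∂μ with hLinfdef
    have h1 : ∀ i, L i ≤ G i := by
      intro i
      have hstep : ∀ k ∈ Finset.range N,
          ∫ x in S k, ((∑ j, A (Y k) j * u i x j) + B (Y k)) ∂μ
            ≤ ∫ x in S k, f (u i x) ∂μ := by
        intro k hk
        refine setIntegral_mono_on (hlint (u i) (hu i) (Y k) (S k) (hSsub k) (hSmeas k))
          ((hintu i).mono_set (hSsub k)) (hSmeas k) ?_
        intro x _
        exact (hAB (Y k) (hYC k (Finset.mem_range.1 hk))).1 (u i x) (huK i x)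
      calc L i ≤ ∑ k ∈ Finset.range N, ∫ x in S k, f (u i x) ∂μ :=
            Finset.sum_le_sum hstep
        _ = G i := by
            have h5 := integral_biUnion_finset (Finset.range N) (fun k _ => hSmeas k)
              (fun a _ b _ hab => hSdisj a b hab) (fun k _ => (hintu i).mono_set (hSsub k))
              (f := fun x => f (u i x)) (μ := μ)
            rw [hSun] at h5
            exact h5.symm
    have h2 : Tendsto L atTop (𝓝 Linf) := by
      rw [hLdef, hLinfdef]
      exact tendsto_finset_sum _ fun k _ => hconv (Y k) (S k) (hSsub k) (hSmeas k)
    have h3 : ∫ x in Ω, f (v x) ∂μ ≤ Linf + ε * (μ Ω).toReal := by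
      have hμsum : ∑ k ∈ Finset.range N, (μ (S k)).toReal = (μ Ω).toReal := by
        have hμ : ∑ k ∈ Finset.range N, μ (S k) = μ Ω := by
          rw [← measure_biUnion_finset (fun a _ b _ hab => hSdisj a b hab)
            (fun k _ => hSmeas k), hSun]
        rw [← hμ, ENNReal.toReal_sum]
        intro k _
        exact (lt_of_le_of_lt (measure_mono (hSsub k)) hΩfin).ne
      have hstep : ∀ k ∈ Finset.range N,
          ∫ x in S k, f (v x) ∂μ
            ≤ ∫ x in S k, ((∑ j, A (Y k) j * v x j) + B (Y k)) ∂μ + ε * (μ (S k)).toReal := by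
        intro k hk
        have hkN := Finset.mem_range.1 hk
        haveI : IsFiniteMeasure (μ.restrict (S k)) := ⟨by
          rw [Measure.restrict_apply_univ]
          exact lt_of_le_of_lt (measure_mono (hSsub k)) hΩfin⟩
        have hmono : ∫ x in S k, f (v x) ∂μ
            ≤ ∫ x in S k, (((∑ j, A (Y k) j * v x j) + B (Y k)) + ε) ∂μ := by
          refine setIntegral_mono_ae_restrict (hintv.mono_set (hSsub k))
            ((hlint v hv (Y k) (S k) (hSsub k) (hSmeas k)).add (integrable_const ε)) ?_
          have hae1 : ∀ᵐ x ∂μ.restrict (S k), x ∈ S k := ae_restrict_mem (hSmeas k)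
          filter_upwards [hae1, ae_restrict_of_ae hv'ae] with x hxS hxv
          have hDk : v' x ∈ D k := hxS.2
          have hOk : v' x ∈ O (Y k) := by
            have hsub : D k ⊆ e k := disjointed_subset e k
            have := hsub hDk
            rw [hedef] at this
            simpa only [dif_pos hkN] using this
          have hYCk := hYC k hkN
          have hkey := (hO (Y k) hYCk).2.2 (v' x) ⟨hOk, (hv'C x).1⟩
          rw [hxv] at hkey
          linarith
        have heq : ∫ x in S k, (((∑ j, A (Y k) j * v x j) + B (Y k)) + ε) ∂μ
            = ∫ x in S k, ((∑ j, A (Y k) j * v x j) + B (Y k)) ∂μ + ε * (μ (S k)).toReal := by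
          haveI : IsFiniteMeasure (μ.restrict (S k)) := ⟨by
            rw [Measure.restrict_apply_univ]
            exact lt_of_le_of_lt (measure_mono (hSsub k)) hΩfin⟩
          rw [integral_add (hlint v hv (Y k) (S k) (hSsub k) (hSmeas k)) (integrable_const _),
            setIntegral_const, smul_eq_mul, mul_comm, measureReal_def]
        rw [heq] at hmono
        exact hmono
      calc ∫ x in Ω, f (v x) ∂μ = ∑ k ∈ Finset.range N, ∫ x in S k, f (v x) ∂μ := by
            have h5 := integral_biUnion_finset (Finset.range N) (fun k _ => hSmeas k)
              (fun a _ b _ hab => hSdisj a b hab) (fun k _ => hintv.mono_set (hSsub k))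
              (f := fun x => f (v x)) (μ := μ)
            rw [hSun] at h5
            exact h5
        _ ≤ ∑ k ∈ Finset.range N,
              (∫ x in S k, ((∑ j, A (Y k) j * v x j) + B (Y k)) ∂μ + ε * (μ (S k)).toReal) :=
            Finset.sum_le_sum hstep
        _ = Linf + ε * ∑ k ∈ Finset.range N, (μ (S k)).toReal := by
            rw [Finset.sum_add_distrib, ← Finset.mul_sum, hLinfdef]
        _ = Linf + ε * (μ Ω).toReal := by rw [hμsum]
    have h4 : Linf ≤ Filter.liminf G atTop := by
      have hLliminf : Filter.liminf L atTop = Linf := h2.liminf_eq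
      rw [← hLliminf]
      refine liminf_le_liminf (Eventually.of_forall h1) ?_ ?_
      · exact h2.isBoundedUnder_ge
      · exact isCoboundedUnder_ge_of_le atTop (x := (μ Ω).toReal * M) hupper
    calc ∫ x in Ω, f (v x) ∂μ ≤ Linf + ε * (μ Ω).toReal := h3
      _ ≤ Filter.liminf G atTop + ε * (μ Ω).toReal := by linarith
  -- conclude
  by_contra hcon
  push_neg at hcon
  set d := ∫ x in Ω, f (v x) ∂μ - Filter.liminf (fun i => ∫ x in Ω, f (u i x) ∂μ) atTop with hd
  have hd0 : 0 < d := sub_pos.2 hcon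
  have hε : (0 : ℝ) < d / (2 * ((μ Ω).toReal + 1)) := by positivity
  have := main _ hε
  have hmul : d / (2 * ((μ Ω).toReal + 1)) * (μ Ω).toReal ≤ d / 2 := by
    rw [div_mul_eq_mul_div, div_le_div_iff₀ (by positivity) (by norm_num)]
    nlinarith [ENNReal.toReal_nonneg (a := μ Ω)]
  linarith
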